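/- For every real a ≥ 1 and every b ∈ ℝ, the complex Gamma function satisfies |Γ(a+ib)| ≥ Γ(a) / (cosh(πb))^{1/2}. -/

import Mathlib

open Filter Finset Real Topology

lemma abs_gamma_half_sq (b : ℝ) :
    (‖Complex.Gamma (((1/2:ℝ):ℂ) + (b:ℂ)*Complex.I)‖)^2 = π / Real.cosh (π*b) := by
  have h := Complex.Gamma_mul_Gamma_one_sub (((1/2:ℝ):ℂ) + (b:ℂ)*Complex.I)
  have h1 : (1:ℂ) - (((1/2:ℝ):ℂ) + (b:ℂ)*Complex.I) = (starRingEnd ℂ) (((1/2:ℝ):ℂ) + (b:ℂ)*Complex.I) := by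
    simp [Complex.ext_iff]; norm_num
  rw [h1, Complex.Gamma_conj, Complex.mul_conj, Complex.normSq_eq_norm_sq] at h
  have h2 : Complex.sin (↑π * (((1/2:ℝ):ℂ) + ↑b * Complex.I)) = (Real.cosh (π*b) : ℂ) := by
    have : (↑π * (((1/2:ℝ):ℂ) + ↑b * Complex.I)) = ↑(π/2) + ↑(π*b)*Complex.I := by
      push_cast; ring
    rw [this, Complex.sin_add, Complex.cos_mul_I, Complex.sin_mul_I]
    simp [← Complex.ofReal_cos, ← Complex.ofReal_sin, Real.cos_pi_div_two, Real.sin_pi_div_two,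
      ← Complex.ofReal_cosh]
    simp [Complex.ext_iff]
  rw [h2] at h
  exact_mod_cast h

lemma absGammaSeq (x b : ℝ) (n : ℕ) (hn : n ≠ 0) :
    ‖Complex.GammaSeq ((x:ℂ) + (b:ℂ)*Complex.I) n‖ =
      ((n:ℝ)^x * n.factorial) / ∏ j ∈ range (n+1), ‖(x:ℂ) + (j:ℂ) + (b:ℂ)*Complex.I‖ := by
  rw [Complex.GammaSeq, norm_div, norm_mul, norm_prod]
  congr 1
  · congr 1
    · rw [show ((n:ℂ)) = (((n:ℝ)):ℂ) by push_cast; rfl,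
        Complex.norm_cpow_eq_rpow_re_of_pos (by positivity)]
      · simp
    · simp
  · exact Finset.prod_congr rfl fun j _ => by rw [show (x:ℂ) + (b:ℂ)*Complex.I + (j:ℂ) = (x:ℂ) + (j:ℂ) + (b:ℂ)*Complex.I by ring]

lemma prod_ratio_le (b : ℝ) (n : ℕ) :
    ∏ j ∈ range (n+1), (‖((1/2:ℝ):ℂ) + (j:ℂ) + (b:ℂ)*Complex.I‖ / ((1/2:ℝ) + j))
      ≤ Real.sqrt (Real.cosh (π*b)) := by
  set f : ℕ → ℝ := fun j => ‖((1/2:ℝ):ℂ) + (j:ℂ) + (b:ℂ)*Complex.I‖ / ((1/2:ℝ) + j) with hf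
  have hpos : ∀ j : ℕ, (0:ℝ) < (1/2:ℝ) + j := fun j => by positivity
  have hge : ∀ j : ℕ, (1/2:ℝ) + j ≤ ‖((1/2:ℝ):ℂ) + (j:ℂ) + (b:ℂ)*Complex.I‖ := by
    intro j
    calc (1/2:ℝ) + j ≤ |((((1/2:ℝ):ℂ) + (j:ℂ) + (b:ℂ)*Complex.I)).re| := by
          simp only [Complex.add_re, Complex.ofReal_re, Complex.natCast_re, Complex.mul_re,
            Complex.I_re, Complex.I_im, Complex.ofReal_im, mul_zero, mul_one, zero_sub, add_zero]
          rw [abs_of_nonneg (by positivity)]; norm_num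
      _ ≤ _ := Complex.abs_re_le_norm _
  have hf1 : ∀ j, 1 ≤ f j := by
    intro j
    rw [hf, le_div_iff₀ (hpos j), one_mul]
    exact hge j
  set R : ℕ → ℝ := fun n => ∏ j ∈ range (n+1), f j with hR
  have hR1 : ∀ n, 1 ≤ R n := fun n => by
    simp only [hR]
    calc (1:ℝ) = ∏ _j ∈ range (n+1), (1:ℝ) := by simp
      _ ≤ _ := Finset.prod_le_prod (fun j _ => zero_le_one) (fun j _ => hf1 j)
  have hmono : Monotone R := by
    apply monotone_nat_of_le_succ
    intro n
    have : R (n+1) = R n * f (n+1) := Finset.prod_range_succ f (n+1)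
    rw [this]
    exact le_mul_of_one_le_right (le_trans zero_le_one (hR1 n)) (hf1 (n+1))
  have habs : ‖Complex.Gamma (((1/2:ℝ):ℂ) + (b:ℂ)*Complex.I)‖ = Real.sqrt (π / Real.cosh (π*b)) := by
    rw [← abs_gamma_half_sq b, Real.sqrt_sq (by positivity)]
  have hG0 : Complex.Gamma (((1/2:ℝ):ℂ) + (b:ℂ)*Complex.I) ≠ 0 :=
    Complex.Gamma_ne_zero_of_re_pos (by simp)
  have hlim : Tendsto R atTop (𝓝 (Real.sqrt (Real.cosh (π*b)))) := by
    have h1 : Tendsto (fun n => Real.GammaSeq (1/2) n / ‖Complex.GammaSeq (((1/2:ℝ):ℂ) + (b:ℂ)*Complex.I) n‖)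
        atTop (𝓝 (Real.Gamma (1/2) / ‖Complex.Gamma (((1/2:ℝ):ℂ) + (b:ℂ)*Complex.I)‖)) := by
      apply Filter.Tendsto.div (Real.GammaSeq_tendsto_Gamma _)
      · exact (Complex.GammaSeq_tendsto_Gamma _).norm
      · simpa using hG0
    have heq : ∀ᶠ n in atTop, Real.GammaSeq (1/2) n / ‖Complex.GammaSeq (((1/2:ℝ):ℂ) + (b:ℂ)*Complex.I) n‖ = R n := by
      filter_upwards [eventually_ge_atTop 1] with n hn
      rw [absGammaSeq _ _ _ (by omega), Real.GammaSeq, hR]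
      simp only [hf, Finset.prod_div_distrib]
      have hB : (0:ℝ) < ∏ j ∈ range (n+1), ((1/2:ℝ) + j) := Finset.prod_pos fun j _ => hpos j
      have hC : (0:ℝ) < ∏ j ∈ range (n+1), ‖((1/2:ℝ):ℂ) + (j:ℂ) + (b:ℂ)*Complex.I‖ :=
        Finset.prod_pos fun j _ => lt_of_lt_of_le (hpos j) (hge j)
      have hA : (0:ℝ) < (n:ℝ)^(1/2:ℝ) * n.factorial := by
        have : (0:ℝ) < (n:ℝ) := by exact_mod_cast Nat.pos_of_ne_zero (by omega)
        positivity
      field_simp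
    have hval : Real.Gamma (1/2) / ‖Complex.Gamma (((1/2:ℝ):ℂ) + (b:ℂ)*Complex.I)‖
        = Real.sqrt (Real.cosh (π*b)) := by
      rw [habs, Real.Gamma_one_half_eq, ← Real.sqrt_div pi_pos.le]
      congr 1
      field_simp
    exact hval ▸ h1.congr' heq
  exact hmono.ge_of_tendsto hlim n

/-- For every real `a ≥ 1` and every `b ∈ ℝ`, the complex Gamma
function satisfies `|Γ(a+ib)| ≥ Γ(a) / (cosh (π b))^{1/2}`. -/
theorem gamma_abs_lower_bound (a b : ℝ) (ha : 1 ≤ a) :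
    Real.Gamma a / Real.sqrt (Real.cosh (Real.pi * b)) ≤
      ‖Complex.Gamma ((a : ℂ) + (b : ℂ) * Complex.I)‖ := by
  have hc : (0:ℝ) < Real.cosh (π*b) := Real.cosh_pos _
  have hs : (0:ℝ) < Real.sqrt (Real.cosh (π*b)) := Real.sqrt_pos.mpr hc
  have key : ∀ n : ℕ, 1 ≤ n → Real.GammaSeq a n ≤
      Real.sqrt (Real.cosh (π*b)) * ‖Complex.GammaSeq ((a:ℂ) + (b:ℂ)*Complex.I) n‖ := by
    intro n hn
    rw [absGammaSeq a b n (by omega), Real.GammaSeq]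
    have hnpos : (0:ℝ) < n := by exact_mod_cast hn
    have hA : (0:ℝ) < (n:ℝ)^a * n.factorial := by positivity
    have hajpos : ∀ j : ℕ, (0:ℝ) < a + j := fun j => by positivity
    have h2jpos : ∀ j : ℕ, (0:ℝ) < (1/2:ℝ) + j := fun j => by positivity
    have habsform : ∀ (x : ℝ) (j : ℕ), ‖(x:ℂ) + (j:ℂ) + (b:ℂ)*Complex.I‖
        = Real.sqrt ((x+j)^2 + b^2) := by
      intro x j
      rw [show (x:ℂ) + (j:ℂ) + (b:ℂ)*Complex.I = ((x+j:ℝ):ℂ) + (b:ℝ)*Complex.I by push_cast; ring,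
        Complex.norm_add_mul_I]
    have hB : (0:ℝ) < ∏ j ∈ range (n+1), (a + (j:ℝ)) := Finset.prod_pos fun j _ => hajpos j
    have hC : (0:ℝ) < ∏ j ∈ range (n+1), ‖(a:ℂ) + (j:ℂ) + (b:ℂ)*Complex.I‖ := by
      apply Finset.prod_pos
      intro j _
      rw [habsform]
      have := hajpos j
      positivity
    have hCle : ∏ j ∈ range (n+1), ‖(a:ℂ) + (j:ℂ) + (b:ℂ)*Complex.I‖
        ≤ Real.sqrt (Real.cosh (π*b)) * ∏ j ∈ range (n+1), (a + (j:ℝ)) := by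
      have step1 : ∏ j ∈ range (n+1), ‖(a:ℂ) + (j:ℂ) + (b:ℂ)*Complex.I‖
          ≤ ∏ j ∈ range (n+1), ((a + (j:ℝ)) *
            (‖((1/2:ℝ):ℂ) + (j:ℂ) + (b:ℂ)*Complex.I‖ / ((1/2:ℝ) + j))) := by
        apply Finset.prod_le_prod
        · intro j _; exact norm_nonneg _
        · intro j _
          rw [habsform a j, habsform (1/2) j]
          have h1 := hajpos j
          have h2 := h2jpos j
          have hR : (a + (j:ℝ)) * (Real.sqrt (((1/2:ℝ)+j)^2 + b^2) / ((1/2:ℝ)+j))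
              = Real.sqrt (((a+(j:ℝ))/((1/2:ℝ)+j))^2 * (((1/2:ℝ)+j)^2 + b^2)) := by
            rw [Real.sqrt_mul (by positivity), Real.sqrt_sq (by positivity)]
            ring
          rw [hR]
          apply Real.sqrt_le_sqrt
          have h3 : (1:ℝ) ≤ (a+(j:ℝ))/((1/2:ℝ)+j) := (one_le_div h2).mpr (by linarith)
          have hqq : ((a+(j:ℝ))/((1/2:ℝ)+j)) * ((1/2:ℝ)+j) = a+(j:ℝ) := div_mul_cancel₀ _ h2.ne'
          nlinarith [mul_le_mul h3 h3 zero_le_one (by linarith : (0:ℝ) ≤ (a+(j:ℝ))/((1/2:ℝ)+j)),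
            hqq, sq_nonneg b]
      calc _ ≤ _ := step1
        _ = (∏ j ∈ range (n+1), (a + (j:ℝ))) *
            ∏ j ∈ range (n+1), (‖((1/2:ℝ):ℂ) + (j:ℂ) + (b:ℂ)*Complex.I‖ / ((1/2:ℝ) + j)) :=
          Finset.prod_mul_distrib
        _ ≤ (∏ j ∈ range (n+1), (a + (j:ℝ))) * Real.sqrt (Real.cosh (π*b)) := by
          apply mul_le_mul_of_nonneg_left (prod_ratio_le b n) hB.le
        _ = _ := mul_comm _ _
    rw [← mul_div_assoc, div_le_div_iff₀ hB hC]
    nlinarith [mul_le_mul_of_nonneg_left hCle hA.le]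
  have hz : Tendsto (fun n => Real.sqrt (Real.cosh (π*b)) *
      ‖Complex.GammaSeq ((a:ℂ) + (b:ℂ)*Complex.I) n‖) atTop
      (𝓝 (Real.sqrt (Real.cosh (π*b)) * ‖Complex.Gamma ((a:ℂ) + (b:ℂ)*Complex.I)‖)) := by
    apply Tendsto.const_mul
    exact (Complex.GammaSeq_tendsto_Gamma _).norm
  have hle : Real.Gamma a ≤ Real.sqrt (Real.cosh (π*b)) *
      ‖Complex.Gamma ((a:ℂ) + (b:ℂ)*Complex.I)‖ := by
    exact le_of_tendsto_of_tendsto (Real.GammaSeq_tendsto_Gamma a) hz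
      (Filter.eventually_atTop.mpr ⟨1, key⟩)
  rw [div_le_iff₀ hs, mul_comm]
  exact hle
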